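/- Let ℘ be an odd prime with 3 a primitive root modulo ℘^m, q = 3^{φ(℘^m)}, ξ a primitive ℘^m-th root of unity in 𝔽_q, and χ the canonical additive character of 𝔽_q. Then Σ_{i=0}^{℘^m−1} χ(ξ^i) equals (℘−1)ζ₃² + ℘^m − ℘ + 1 if ℘ ≡ 1 (mod 3); equals (℘−1)ζ₃² + ζ₃ + ℘^m − ℘ if ℘ ≡ −1 (mod 3) and m is odd; and equals ζ₃² + (℘−1)ζ₃ + ℘^m − ℘ if ℘ ≡ −1 (mod 3) and m is even, where ζ₃ = e^{2πi/3}. -/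

import Mathlib

lemma aux_sq_dvd (c : ℤ) : ∀ u : ℕ, c^2 ∣ (1+c)^u - (1 + u*c)
  | 0 => by simp
  | (u+1) => by
    have ih := aux_sq_dvd c u
    have key : (1+c)^(u+1) - (1 + ((u:ℤ)+1)*c)
        = (1+c) * ((1+c)^u - (1 + (u:ℤ)*c)) + u * c^2 := by ring
    push_cast
    rw [key]
    exact dvd_add (Dvd.dvd.mul_left ih _) (Dvd.dvd.mul_left dvd_rfl _)

lemma aux_step (℘ : ℕ) (a : ℤ) (s : ℕ) (hs : 1 ≤ s) (h : (℘:ℤ)^s ∣ a - 1) :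
    (℘:ℤ)^(s+1) ∣ a^℘ - 1 := by
  obtain ⟨c, hc⟩ : ∃ c, a = 1 + c := ⟨a - 1, by ring⟩
  have hdc : (℘:ℤ)^s ∣ c := by rw [hc] at h; simpa using h
  have h1 : (℘:ℤ)^(s+1) ∣ c^2 := by
    calc (℘:ℤ)^(s+1) ∣ (℘:ℤ)^(s*2) := pow_dvd_pow _ (by omega)
    _ = ((℘:ℤ)^s)^2 := by rw [pow_mul]
    _ ∣ c^2 := pow_dvd_pow_of_dvd hdc 2
  have h2 : (℘:ℤ)^(s+1) ∣ (℘:ℤ) * c := by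
    rw [pow_succ, mul_comm]
    exact mul_dvd_mul dvd_rfl hdc
  have key : a^℘ - 1 = ((1+c)^℘ - (1 + (℘:ℤ)*c)) + ℘ * c := by rw [hc]; ring
  rw [key]
  exact dvd_add (h1.trans (aux_sq_dvd c ℘)) h2

lemma aux_iter (℘ : ℕ) (a : ℤ) (s : ℕ) (hs : 1 ≤ s) (h : (℘:ℤ)^s ∣ a - 1) :
    ∀ e : ℕ, (℘:ℤ)^(s+e) ∣ a^(℘^e) - 1
  | 0 => by simpa using h
  | (e+1) => by
    have ih := aux_iter ℘ a s hs h e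
    have := aux_step ℘ (a^(℘^e)) (s+e) (by omega) ih
    rw [← pow_mul, ← pow_succ] at this
    simpa [add_assoc] using this

lemma aux_ne_three (℘ m : ℕ) (h℘ : ℘.Prime) (hm : 1 ≤ m)
    (hprim : orderOf (3 : ZMod (℘ ^ m)) = (℘ ^ m).totient) : ℘ ≠ 3 := by
  intro h3
  have hpos : 0 < (℘ ^ m).totient := Nat.totient_pos.mpr (by positivity)
  have hfin : IsOfFinOrder (3 : ZMod (℘ ^ m)) := by
    rw [← orderOf_pos_iff, hprim]; exact hpos
  have hu : IsUnit (3 : ZMod (℘ ^ m)) := hfin.isUnit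
  have : NeZero (℘ ^ m) := ⟨by positivity⟩
  rw [show ((3 : ZMod (℘ ^ m))) = ((3:ℕ) : ZMod (℘^m)) by norm_cast,
    ZMod.isUnit_iff_coprime] at hu
  rw [h3] at hu
  rw [Nat.coprime_pow_right_iff (by omega)] at hu
  simp [Nat.Coprime] at hu

lemma aux_ord (℘ m : ℕ) (h℘ : ℘.Prime) (hm : 1 ≤ m) (hp3 : ℘ ≠ 3)
    (hprim : orderOf (3 : ZMod (℘ ^ m)) = (℘ ^ m).totient)
    (k : ℕ) (hk1 : 1 ≤ k) (hkm : k ≤ m) :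
    orderOf (3 : ZMod (℘ ^ k)) = (℘ ^ k).totient := by
  have hp2 : 2 ≤ ℘ := h℘.two_le
  have hnz : ∀ j, NeZero (℘ ^ j) := fun j => ⟨by positivity⟩
  have hcop : Nat.Coprime 3 (℘ ^ k) := by
    refine Nat.Coprime.pow_right _ ?_
    rw [Nat.coprime_primes Nat.prime_three h℘]
    omega
  have hu : IsUnit ((3:ℕ) : ZMod (℘ ^ k)) := (ZMod.isUnit_iff_coprime 3 (℘^k)).mpr hcop
  set t := orderOf (3 : ZMod (℘ ^ k)) with ht
  have hcast : ((3:ℕ) : ZMod (℘^k)) = (3 : ZMod (℘^k)) := by norm_cast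
  -- t divides totient
  have hdvd1 : t ∣ (℘ ^ k).totient := by
    apply orderOf_dvd_of_pow_eq_one
    have := ZMod.pow_totient hu.unit
    have := congrArg (Units.val) this
    rw [Units.val_pow_eq_pow_val, IsUnit.unit_spec] at this
    rw [← hcast]
    simpa using this
  -- 3^t ≡ 1 mod ℘^k
  have hpow : (((3:ℕ)^t : ℕ) : ZMod (℘^k)) = (((1:ℕ)) : ZMod (℘^k)) := by
    push_cast
    exact pow_orderOf_eq_one _
  have hmod : (3:ℕ)^t ≡ 1 [MOD ℘^k] := (ZMod.natCast_eq_natCast_iff _ _ _).mp hpow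
  have hint : ((℘:ℤ))^k ∣ (3:ℤ)^t - 1 := by
    have h2 := hmod.dvd.neg_right
    rw [neg_sub] at h2
    push_cast at h2 ⊢
    exact h2
  have hbig : ((℘:ℤ))^m ∣ (3:ℤ)^(t * ℘^(m-k)) - 1 := by
    have := aux_iter ℘ ((3:ℤ)^t) k hk1 hint (m-k)
    rw [← pow_mul] at this
    have hkm' : k + (m - k) = m := by omega
    rwa [hkm'] at this
  have hone : (3 : ZMod (℘^m))^(t * ℘^(m-k)) = 1 := by
    have h0 : (((3:ℤ)^(t * ℘^(m-k)) - 1 : ℤ) : ZMod (℘^m)) = 0 := by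
      rw [ZMod.intCast_zmod_eq_zero_iff_dvd]
      push_cast
      exact hbig
    push_cast at h0
    linear_combination h0
  have hdvd2 : (℘^m).totient ∣ t * ℘^(m-k) := by
    rw [← hprim]; exact orderOf_dvd_of_pow_eq_one hone
  have htotm : (℘^m).totient = (℘^k).totient * ℘^(m-k) := by
    rw [Nat.totient_prime_pow h℘ (by omega), Nat.totient_prime_pow h℘ (by omega)]
    rw [show m - 1 = (k-1) + (m-k) by omega, pow_add]
    ring
  rw [htotm] at hdvd2
  have hdvd2' : (℘^k).totient ∣ t := by
    have hc : 0 < ℘^(m-k) := by positivity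
    rw [Nat.mul_dvd_mul_iff_right hc] at hdvd2
    exact hdvd2
  exact Nat.dvd_antisymm hdvd1 hdvd2'

lemma aux_trace (F : Type*) [Field F] [Fintype F] [Algebra (ZMod 3) F]
    (r : ℕ) (hr : 1 ≤ r) (hcard : Fintype.card F = 3 ^ r) (x : F) :
    algebraMap (ZMod 3) F (Algebra.trace (ZMod 3) F x)
      = ∑ j ∈ Finset.range r, x ^ 3 ^ j := by
  haveI : Fact (Nat.Prime 3) := ⟨Nat.prime_three⟩
  classical
  haveI hchar : CharP F 3 := (Algebra.charP_iff (ZMod 3) F 3).mp inferInstance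
  have hrank : Module.finrank (ZMod 3) F = r := by
    have h := Module.card_eq_pow_finrank (K := ZMod 3) (V := F)
    rw [ZMod.card, hcard] at h
    exact (Nat.pow_right_injective (by norm_num) h.symm)
  haveI : FiniteDimensional (ZMod 3) F := by
    infer_instance
  -- frobenius as AlgEquiv
  let fr : F →ₐ[ZMod 3] F :=
    { toRingHom := frobenius F 3,
      commutes' := fun c => by
        show frobenius F 3 (algebraMap (ZMod 3) F c) = algebraMap (ZMod 3) F c
        rw [frobenius_def, ← map_pow, ZMod.pow_card] }
  have hbij : Function.Bijective fr := by
    have hinj : Function.Injective fr := frobenius_inj F 3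
    exact (Finite.injective_iff_bijective).mp hinj
  let f : F ≃ₐ[ZMod 3] F := AlgEquiv.ofBijective fr hbij
  have hpa : ∀ (j : ℕ) (y : F), (f ^ j) y = y ^ 3 ^ j := by
    intro j
    induction j with
    | zero => intro y; simp
    | succ j ih =>
      intro y
      have : f ^ (j+1) = f ^ j * f := pow_succ f j
      rw [this]
      have happ : (f ^ j * f) y = (f ^ j) (f y) := rfl
      rw [happ, show f y = y ^ 3 from rfl, ih, ← pow_mul, pow_succ, mul_comm]
  have hfr : f ^ r = 1 := by
    ext y
    have : (f ^ r) y = y ^ 3 ^ r := hpa r y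
    rw [this, ← hcard, FiniteField.pow_card]
    rfl
  have hordf : orderOf f = r := by
    have hdvd : orderOf f ∣ r := orderOf_dvd_of_pow_eq_one hfr
    rcases Nat.lt_or_ge (orderOf f) r with hlt | hge
    · exfalso
      set t := orderOf f with htdef
      have ht1 : 1 ≤ t := by
        have : IsOfFinOrder f := isOfFinOrder_of_finite f
        have := this.orderOf_pos
        omega
      -- every element is a root of X^(3^t) - X
      have hroot : ∀ y : F, y ^ 3 ^ t = y := by
        intro y
        have := hpa t y
        rw [pow_orderOf_eq_one f] at this
        simpa using this.symm
      set P : Polynomial F := Polynomial.X ^ 3 ^ t - Polynomial.X with hP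
      have hPne : P ≠ 0 := FiniteField.X_pow_card_pow_sub_X_ne_zero F (by omega) (by norm_num)
      have hdeg : P.natDegree = 3 ^ t :=
        FiniteField.X_pow_card_pow_sub_X_natDegree_eq F (by omega) (by norm_num)
      have hsub : (Finset.univ : Finset F) ⊆ P.roots.toFinset := by
        intro y _
        rw [Multiset.mem_toFinset, Polynomial.mem_roots hPne]
        simp [hP, Polynomial.IsRoot, hroot y]
      have hcardle : Fintype.card F ≤ 3 ^ t := by
        calc Fintype.card F = (Finset.univ : Finset F).card := rfl
        _ ≤ P.roots.toFinset.card := Finset.card_le_card hsub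
        _ ≤ Multiset.card P.roots := P.roots.toFinset_card_le
        _ ≤ P.natDegree := P.card_roots'
        _ = 3 ^ t := hdeg
      rw [hcard] at hcardle
      have := Nat.pow_le_pow_right (show 0 < 3 by norm_num) hlt.le
      have h33 := Nat.pow_lt_pow_right (show 1 < 3 by norm_num) hlt
      omega
    · have := Nat.le_of_dvd (by omega) hdvd
      omega
  have hcardaut : Fintype.card (F ≃ₐ[ZMod 3] F) = r := by
    rw [← Nat.card_eq_fintype_card, IsGalois.card_aut_eq_finrank, hrank]
  have hinj : Set.InjOn (f ^ ·) (Set.Iio r) := by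
    rw [← hordf]; exact pow_injOn_Iio_orderOf
  have hinj' : Set.InjOn (f ^ ·) (Finset.range r : Set _) := by
    intro a ha b hb hab
    exact hinj (by simpa using ha) (by simpa using hb) hab
  have himg : (Finset.range r).image (f ^ ·) = (Finset.univ : Finset (F ≃ₐ[ZMod 3] F)) := by
    apply Finset.eq_univ_of_card
    rw [Finset.card_image_of_injOn hinj', Finset.card_range, hcardaut]
  rw [trace_eq_sum_automorphisms x, ← himg, Finset.sum_image hinj']
  exact Finset.sum_congr rfl fun j _ => hpa j x

lemma aux_geom {K : Type*} [Field K] (η : K) (d : ℕ) (hne : η ≠ 1) (hd : η ^ d = 1) :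
    ∑ i ∈ Finset.range d, η ^ i = 0 := by
  have h := geom_sum_mul η d
  rw [hd, sub_self] at h
  rcases mul_eq_zero.mp h with h' | h'
  · exact h'
  · exact absurd (by linear_combination h' : η = 1) hne

lemma aux_period_iter {M : Type*} (g : ℕ → M) (t : ℕ)
    (hper : ∀ j, g (j + t) = g j) : ∀ (c j : ℕ), g (j + t * c) = g j
  | 0, j => by simp
  | (c+1), j => by
    have h1 : j + t * (c+1) = (j + t * c) + t := by ring
    rw [h1, hper, aux_period_iter g t hper c j]

lemma aux_period {M : Type*} [AddCommMonoid M] (g : ℕ → M) (t u : ℕ)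
    (hper : ∀ j, g (j + t) = g j) :
    ∑ j ∈ Finset.range (t * u), g j = u • ∑ j ∈ Finset.range t, g j := by
  induction u with
  | zero => simp
  | succ u ih =>
    have h : t * (u + 1) = t * u + t := by ring
    rw [h, Finset.sum_range_add, ih, succ_nsmul]
    congr 1
    refine Finset.sum_congr rfl fun i _ => ?_
    have : t * u + i = i + t * u := by ring
    rw [this, aux_period_iter g t hper u i]
lemma aux_eta (℘ m : ℕ) (h℘ : ℘.Prime) (hm : 1 ≤ m) (hp3 : ℘ ≠ 3)
    (hprim : orderOf (3 : ZMod (℘ ^ m)) = (℘ ^ m).totient)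
    {F : Type*} [Field F]
    (k : ℕ) (hk1 : 1 ≤ k) (hkm : k ≤ m) (η : F) (hη : orderOf η = ℘ ^ k) :
    ∑ j ∈ Finset.range ((℘ ^ m).totient), η ^ 3 ^ j
      = (℘ ^ (m - k) : ℕ) • (if k = 1 then (-1 : F) else 0) := by
  classical
  have hp2 : 2 ≤ ℘ := h℘.two_le
  have hpk1 : 1 < ℘ ^ k := Nat.one_lt_pow (by omega) (by omega)
  set t := orderOf (3 : ZMod (℘ ^ k)) with htdef
  have hto : t = (℘ ^ k).totient := aux_ord ℘ m h℘ hm hp3 hprim k hk1 hkm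
  have hη1 : η ≠ 1 := by
    intro h
    rw [h, orderOf_one] at hη
    omega
  have hηpow : η ^ (℘ ^ k) = 1 := by rw [← hη]; exact pow_orderOf_eq_one η
  -- ℘^k ∣ 3^t - 1
  have hpow : (((3:ℕ) ^ t : ℕ) : ZMod (℘ ^ k)) = (((1:ℕ)) : ZMod (℘ ^ k)) := by
    push_cast
    exact pow_orderOf_eq_one _
  have hmod : (3:ℕ) ^ t ≡ 1 [MOD ℘ ^ k] := (ZMod.natCast_eq_natCast_iff _ _ _).mp hpow
  have hdvd : ℘ ^ k ∣ 3 ^ t - 1 := (Nat.modEq_iff_dvd' (Nat.one_le_pow _ _ (by norm_num))).mp hmod.symm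
  obtain ⟨w, hw⟩ := hdvd
  have h3t : 3 ^ t = ℘ ^ k * w + 1 := by
    have : 1 ≤ 3 ^ t := Nat.one_le_pow _ _ (by norm_num)
    omega
  have hη3t : η ^ 3 ^ t = η := by
    rw [h3t, pow_add, pow_mul, hηpow, one_pow, pow_one, one_mul]
  -- periodicity
  have hper : ∀ j, η ^ 3 ^ (j + t) = η ^ 3 ^ j := by
    intro j
    rw [pow_add, mul_comm, pow_mul, hη3t]
  -- r = t * ℘^(m-k)
  have hr : (℘ ^ m).totient = t * ℘ ^ (m - k) := by
    rw [hto, Nat.totient_prime_pow h℘ (by omega), Nat.totient_prime_pow h℘ (by omega)]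
    rw [show m - 1 = (k - 1) + (m - k) by omega, pow_add]
    ring
  rw [hr, aux_period (fun j => η ^ 3 ^ j) t (℘ ^ (m - k)) hper]
  congr 1
  -- ∑_{j<t} η^(3^j) = -1 or 0
  have hmodpow : ∀ j : ℕ, η ^ 3 ^ j = η ^ (3 ^ j % ℘ ^ k) := by
    intro j
    conv_lhs => rw [show (3:ℕ) ^ j = ℘ ^ k * (3 ^ j / ℘ ^ k) + 3 ^ j % ℘ ^ k from (Nat.div_add_mod _ _).symm]
    rw [pow_add, pow_mul, hηpow, one_pow, one_mul]
  have hcast : ∀ j : ℕ, ((3 ^ j % ℘ ^ k : ℕ) : ZMod (℘ ^ k)) = (3 : ZMod (℘ ^ k)) ^ j := by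
    intro j
    rw [ZMod.natCast_mod]
    push_cast
    rfl
  have hinj : Set.InjOn (fun j => 3 ^ j % ℘ ^ k) (Finset.range t : Set ℕ) := by
    intro a ha b hb hab
    simp only [Finset.coe_range, Set.mem_Iio] at ha hb
    have hab' : 3 ^ a % ℘ ^ k = 3 ^ b % ℘ ^ k := hab
    have : (3 : ZMod (℘ ^ k)) ^ a = (3 : ZMod (℘ ^ k)) ^ b := by
      rw [← hcast a, ← hcast b, hab']
    exact pow_injOn_Iio_orderOf (by simpa [htdef] using ha) (by simpa [htdef] using hb) this
  set S : Finset ℕ := (Finset.range (℘ ^ k)).filter (fun x => ¬ ℘ ∣ x) with hS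
  have hsub : (Finset.range t).image (fun j => 3 ^ j % ℘ ^ k) ⊆ S := by
    intro x hx
    rw [Finset.mem_image] at hx
    obtain ⟨j, _, rfl⟩ := hx
    rw [hS, Finset.mem_filter, Finset.mem_range]
    refine ⟨Nat.mod_lt _ (by omega), ?_⟩
    intro hdvd'
    have h1 : ℘ ∣ ℘ ^ k := dvd_pow_self ℘ (by omega)
    have h2 : ℘ ∣ 3 ^ j := by
      have heq := Nat.div_add_mod (3 ^ j) (℘ ^ k)
      rw [← heq]
      exact dvd_add (h1.mul_right _) hdvd'
    have := h℘.dvd_of_dvd_pow h2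
    have := (Nat.prime_dvd_prime_iff_eq h℘ Nat.prime_three).mp this
    exact hp3 this
  have hScard : S.card = t := by
    have : S = (Finset.range (℘ ^ k)).filter ((℘ ^ k).Coprime ·) := by
      apply Finset.filter_congr
      intro x _
      rw [Nat.coprime_pow_left_iff (by omega), h℘.coprime_iff_not_dvd]
    rw [this, ← Nat.totient_eq_card_coprime, hto]
  have himg : (Finset.range t).image (fun j => 3 ^ j % ℘ ^ k) = S := by
    apply Finset.eq_of_subset_of_card_le hsub
    rw [Finset.card_image_of_injOn hinj, Finset.card_range, hScard]
  have hsumS : ∑ j ∈ Finset.range t, η ^ 3 ^ j = ∑ x ∈ S, η ^ x := by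
    rw [← himg, Finset.sum_image hinj]
    exact Finset.sum_congr rfl fun j _ => hmodpow j
  rw [hsumS]
  -- split range ℘^k
  have hsplit := Finset.sum_filter_add_sum_filter_not (Finset.range (℘ ^ k)) (fun x => ℘ ∣ x)
      (fun x => η ^ x)
  have htotal : ∑ x ∈ Finset.range (℘ ^ k), η ^ x = 0 := aux_geom η _ hη1 hηpow
  have hD : (Finset.range (℘ ^ k)).filter (fun x => ℘ ∣ x)
      = (Finset.range (℘ ^ (k - 1))).image (fun y => ℘ * y) := by
    ext x
    simp only [Finset.mem_filter, Finset.mem_range, Finset.mem_image]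
    constructor
    · rintro ⟨hx, ⟨y, rfl⟩⟩
      refine ⟨y, ?_, rfl⟩
      have hpk : ℘ ^ k = ℘ * ℘ ^ (k - 1) := by
        rw [← pow_succ']
        congr 1
        omega
      rw [hpk] at hx
      exact lt_of_mul_lt_mul_left hx (by omega)
    · rintro ⟨y, hy, rfl⟩
      refine ⟨?_, ⟨y, rfl⟩⟩
      have hpk : ℘ ^ k = ℘ * ℘ ^ (k - 1) := by
        rw [← pow_succ']
        congr 1
        omega
      rw [hpk]
      exact (mul_lt_mul_iff_right₀ (by omega : 0 < ℘)).mpr hy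
  have hDinj : Set.InjOn (fun y => ℘ * y) (Finset.range (℘ ^ (k - 1)) : Set ℕ) := by
    intro a _ b _ hab
    exact Nat.eq_of_mul_eq_mul_left (by omega) hab
  have hsumD : ∑ x ∈ (Finset.range (℘ ^ k)).filter (fun x => ℘ ∣ x), η ^ x
      = ∑ y ∈ Finset.range (℘ ^ (k - 1)), (η ^ ℘) ^ y := by
    rw [hD, Finset.sum_image hDinj]
    exact Finset.sum_congr rfl fun y _ => by rw [pow_mul]
  have hSval : ∑ x ∈ S, η ^ x = - ∑ y ∈ Finset.range (℘ ^ (k - 1)), (η ^ ℘) ^ y := by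
    rw [htotal] at hsplit
    rw [hS, ← hsumD]
    linear_combination hsplit
  rw [hSval]
  by_cases hk : k = 1
  · subst hk
    simp
  · have hk2 : 2 ≤ k := by omega
    rw [if_neg hk]
    have hne : η ^ ℘ ≠ 1 := by
      intro h
      have := orderOf_dvd_of_pow_eq_one h
      rw [hη] at this
      have h1 := Nat.le_of_dvd (by omega) this
      have h2 : ℘ ^ 2 ≤ ℘ ^ k := Nat.pow_le_pow_right (by omega) hk2
      nlinarith [sq_nonneg ℘]
    have hpowk : (η ^ ℘) ^ (℘ ^ (k - 1)) = 1 := by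
      rw [← pow_mul, ← pow_succ']
      rw [show k - 1 + 1 = k by omega]
      exact hηpow
    rw [aux_geom _ _ hne hpowk, neg_zero]
lemma aux_filter_card (d u : ℕ) (hd : 0 < d) :
    ((Finset.range (d * u)).filter (fun x => d ∣ x)).card = u := by
  classical
  have himg : (Finset.range (d * u)).filter (fun x => d ∣ x)
      = (Finset.range u).image (fun y => d * y) := by
    ext x
    simp only [Finset.mem_filter, Finset.mem_range, Finset.mem_image]
    constructor
    · rintro ⟨hx, y, rfl⟩
      exact ⟨y, lt_of_mul_lt_mul_left hx (by omega), rfl⟩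
    · rintro ⟨y, hy, rfl⟩
      exact ⟨(mul_lt_mul_iff_right₀ hd).mpr hy, ⟨y, rfl⟩⟩
  rw [himg, Finset.card_image_of_injOn (fun a _ b _ hab => Nat.eq_of_mul_eq_mul_left hd hab),
    Finset.card_range]

lemma aux_count (℘ m : ℕ) (hp2 : 2 ≤ ℘) (hm : 1 ≤ m) (A B C : ℂ) :
    ∑ i ∈ Finset.range (℘ ^ m), (if i = 0 then A else if ℘ ^ (m - 1) ∣ i then B else C)
      = A + ((℘ : ℂ) - 1) * B + ((℘ : ℂ) ^ m - ℘) * C := by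
  classical
  have hsplit : ∀ i ∈ Finset.range (℘ ^ m),
      (if i = 0 then A else if ℘ ^ (m - 1) ∣ i then B else C)
        = (if i = 0 then A - B else 0) + (if ℘ ^ (m - 1) ∣ i then B - C else 0) + C := by
    intro i _
    by_cases h0 : i = 0
    · subst h0
      simp
    · rw [if_neg h0, if_neg h0]
      by_cases hdvd : ℘ ^ (m - 1) ∣ i
      · rw [if_pos hdvd, if_pos hdvd]; ring
      · rw [if_neg hdvd, if_neg hdvd]; ring
  rw [Finset.sum_congr rfl hsplit]
  rw [Finset.sum_add_distrib, Finset.sum_add_distrib]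
  have h1 : ∑ i ∈ Finset.range (℘ ^ m), (if i = 0 then A - B else 0) = A - B := by
    rw [Finset.sum_ite_eq' (Finset.range (℘ ^ m)) 0 (fun _ => A - B)]
    rw [if_pos (Finset.mem_range.mpr (by positivity))]
  have h2 : ∑ i ∈ Finset.range (℘ ^ m), (if ℘ ^ (m - 1) ∣ i then B - C else 0)
      = (℘ : ℂ) * (B - C) := by
    rw [← Finset.sum_filter]
    rw [Finset.sum_const]
    have hrw : ℘ ^ m = ℘ ^ (m - 1) * ℘ := by
      rw [← pow_succ]
      congr 1
      omega
    rw [hrw, aux_filter_card (℘ ^ (m - 1)) ℘ (by positivity)]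
    simp [nsmul_eq_mul]
  have h3 : ∑ _i ∈ Finset.range (℘ ^ m), C = ((℘ : ℂ) ^ m) * C := by
    rw [Finset.sum_const, Finset.card_range, nsmul_eq_mul]
    push_cast
    ring
  rw [h1, h2, h3]
  ring

/-- The canonical additive character of a finite field `F` of characteristic `3`. -/
noncomputable def canChar (F : Type*) [Field F] [Fintype F] [Algebra (ZMod 3) F]
    (x : F) : ℂ :=
  Complex.exp (2 * Real.pi * Complex.I / 3) ^ (Algebra.trace (ZMod 3) F x).val

theorem stmt_18 (℘ m : ℕ) (h℘ : ℘.Prime) (h℘odd : Odd ℘) (hm : 1 ≤ m)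
    (hprim : orderOf (3 : ZMod (℘ ^ m)) = (℘ ^ m).totient)
    (F : Type*) [Field F] [Fintype F] [Algebra (ZMod 3) F]
    (hcard : Fintype.card F = 3 ^ (℘ ^ m).totient)
    (ξ : F) (hξ : IsPrimitiveRoot ξ (℘ ^ m)) :
    (℘ % 3 = 1 →
      (∑ i ∈ Finset.range (℘ ^ m), canChar F (ξ ^ i)) =
        ((℘ : ℂ) - 1) * Complex.exp (2 * Real.pi * Complex.I / 3) ^ 2
          + (℘ : ℂ) ^ m - (℘ : ℂ) + 1) ∧
    (℘ % 3 = 2 → Odd m →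
      (∑ i ∈ Finset.range (℘ ^ m), canChar F (ξ ^ i)) =
        ((℘ : ℂ) - 1) * Complex.exp (2 * Real.pi * Complex.I / 3) ^ 2
          + Complex.exp (2 * Real.pi * Complex.I / 3) + (℘ : ℂ) ^ m - (℘ : ℂ)) ∧
    (℘ % 3 = 2 → Even m →
      (∑ i ∈ Finset.range (℘ ^ m), canChar F (ξ ^ i)) =
        Complex.exp (2 * Real.pi * Complex.I / 3) ^ 2
          + ((℘ : ℂ) - 1) * Complex.exp (2 * Real.pi * Complex.I / 3)
          + (℘ : ℂ) ^ m - (℘ : ℂ)) := by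
  classical
  set ζ : ℂ := Complex.exp (2 * Real.pi * Complex.I / 3) with hζ
  have hp2 : 2 ≤ ℘ := h℘.two_le
  have hp3 : ℘ ≠ 3 := aux_ne_three ℘ m h℘ hm hprim
  set r : ℕ := (℘ ^ m).totient with hrdef
  have hr1 : 1 ≤ r := Nat.totient_pos.mpr (by positivity)
  have hordξ : orderOf ξ = ℘ ^ m := hξ.eq_orderOf.symm
  have hinj : Function.Injective (algebraMap (ZMod 3) F) := (algebraMap (ZMod 3) F).injective
  have hrank : Module.finrank (ZMod 3) F = r := by
    haveI : Fact (Nat.Prime 3) := ⟨Nat.prime_three⟩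
    have h := Module.card_eq_pow_finrank (K := ZMod 3) (V := F)
    rw [ZMod.card, hcard] at h
    exact Nat.pow_right_injective (by norm_num) h.symm
  set T0 : ZMod 3 := (r : ZMod 3) with hT0
  set T1 : ZMod 3 := -((℘ : ZMod 3)) ^ (m - 1) with hT1
  -- trace of 1
  have htr1 : Algebra.trace (ZMod 3) F 1 = T0 := by
    have h := Algebra.trace_algebraMap (R := ZMod 3) (S := F) 1
    rw [map_one] at h
    rw [h, hrank, hT0]
    simp [nsmul_eq_mul]
  -- trace values for i ≠ 0
  have hmain : ∀ i ∈ Finset.range (℘ ^ m), canChar F (ξ ^ i)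
      = if i = 0 then ζ ^ T0.val else if ℘ ^ (m - 1) ∣ i then ζ ^ T1.val else 1 := by
    intro i hi
    rw [Finset.mem_range] at hi
    by_cases h0 : i = 0
    · subst h0
      rw [if_pos rfl, pow_zero]
      show ζ ^ (Algebra.trace (ZMod 3) F 1).val = ζ ^ T0.val
      rw [htr1]
    · rw [if_neg h0]
      -- gcd structure
      obtain ⟨s, hsm, hgs⟩ := (Nat.dvd_prime_pow h℘).mp (Nat.gcd_dvd_left (℘ ^ m) i)
      have hgdvdi : ℘ ^ s ∣ i := hgs ▸ Nat.gcd_dvd_right (℘ ^ m) i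
      have hslt : s < m := by
        rcases Nat.lt_or_ge s m with h | h
        · exact h
        · exfalso
          have hsm' : s = m := le_antisymm hsm h
          rw [hsm'] at hgdvdi
          have := Nat.le_of_dvd (by omega) hgdvdi
          omega
      set k := m - s with hk
      have hk1 : 1 ≤ k := by omega
      have hkm : k ≤ m := by omega
      have hok : orderOf (ξ ^ i) = ℘ ^ k := by
        rw [orderOf_pow' ξ h0, hordξ]
        rw [show (℘ ^ m).gcd i = ℘ ^ s from hgs]
        rw [Nat.pow_div (by omega) (by omega), hk]
      have hsum := aux_eta ℘ m h℘ hm hp3 hprim k hk1 hkm (ξ ^ i) hok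
      have htr := aux_trace F r hr1 hcard (ξ ^ i)
      rw [← hrdef] at hsum
      have hcomb := htr.trans hsum
      have hiff : (℘ ^ (m - 1) ∣ i) ↔ k = 1 := by
        constructor
        · intro hdvd
          have h1 : ℘ ^ (m - 1) ∣ Nat.gcd (℘ ^ m) i :=
            Nat.dvd_gcd (pow_dvd_pow ℘ (by omega)) hdvd
          rw [hgs] at h1
          have := (Nat.pow_dvd_pow_iff_le_right (by omega)).mp h1
          omega
        · intro hk1'
          have hs' : s = m - 1 := by omega
          rw [← hs']
          exact hgdvdi
      by_cases hdvd : ℘ ^ (m - 1) ∣ i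
      · rw [if_pos hdvd]
        have hk1' : k = 1 := hiff.mp hdvd
        rw [hk1'] at hcomb
        rw [if_pos rfl] at hcomb
        have htrval : Algebra.trace (ZMod 3) F (ξ ^ i) = T1 := by
          apply hinj
          rw [hcomb, hT1]
          rw [map_neg, map_pow, map_natCast]
          rw [nsmul_eq_mul]
          push_cast
          ring
        show ζ ^ (Algebra.trace (ZMod 3) F (ξ ^ i)).val = ζ ^ T1.val
        rw [htrval]
      · rw [if_neg hdvd]
        have hkne : k ≠ 1 := fun h => hdvd (hiff.mpr h)
        rw [if_neg hkne, smul_zero] at hcomb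
        have htrval : Algebra.trace (ZMod 3) F (ξ ^ i) = 0 := by
          apply hinj
          rw [hcomb, map_zero]
        show ζ ^ (Algebra.trace (ZMod 3) F (ξ ^ i)).val = 1
        rw [htrval, ZMod.val_zero, pow_zero]
  have hsumval : (∑ i ∈ Finset.range (℘ ^ m), canChar F (ξ ^ i))
      = ζ ^ T0.val + ((℘ : ℂ) - 1) * ζ ^ T1.val + ((℘ : ℂ) ^ m - ℘) * 1 := by
    rw [Finset.sum_congr rfl hmain]
    exact aux_count ℘ m hp2 hm _ _ _
  -- residues
  have hrt : (T0 : ZMod 3) = (℘ : ZMod 3) ^ (m - 1) * ((℘ : ZMod 3) - 1) := by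
    rw [hT0, hrdef, Nat.totient_prime_pow h℘ (by omega)]
    push_cast [Nat.cast_sub (by omega : 1 ≤ ℘)]
    ring
  have hPmod : ((℘ : ZMod 3)) = ((℘ % 3 : ℕ) : ZMod 3) := by
    rw [ZMod.natCast_mod]
  refine ⟨?_, ?_, ?_⟩
  · intro h1
    have hP : (℘ : ZMod 3) = 1 := by rw [hPmod, h1]; norm_num
    have hT0v : T0 = 0 := by rw [hrt, hP]; ring
    have hT1v : T1 = 2 := by rw [hT1, hP, one_pow]; decide
    rw [hsumval, hT0v, hT1v]
    show ζ ^ (0 : ZMod 3).val + ((℘:ℂ) - 1) * ζ ^ (2 : ZMod 3).val + ((℘:ℂ)^m - ℘) * 1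
      = ((℘ : ℂ) - 1) * ζ ^ 2 + (℘ : ℂ) ^ m - (℘ : ℂ) + 1
    rw [show (0 : ZMod 3).val = 0 from rfl, show (2 : ZMod 3).val = 2 from rfl]
    ring
  · intro h1 hmodd
    have hP : (℘ : ZMod 3) = 2 := by rw [hPmod, h1]; norm_num
    have heven : Even (m - 1) := Nat.Odd.sub_odd hmodd odd_one
    have hpow : ((℘ : ZMod 3)) ^ (m - 1) = 1 := by
      rw [hP, show (2 : ZMod 3) = -1 by decide, heven.neg_one_pow]
    have hT0v : T0 = 1 := by rw [hrt, hpow, hP]; decide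
    have hT1v : T1 = 2 := by rw [hT1, hpow]; decide
    rw [hsumval, hT0v, hT1v]
    show ζ ^ (1 : ZMod 3).val + ((℘:ℂ) - 1) * ζ ^ (2 : ZMod 3).val + ((℘:ℂ)^m - ℘) * 1
      = ((℘ : ℂ) - 1) * ζ ^ 2 + ζ + (℘ : ℂ) ^ m - (℘ : ℂ)
    rw [show (1 : ZMod 3).val = 1 from rfl, show (2 : ZMod 3).val = 2 from rfl]
    ring
  · intro h1 hmeven
    have hP : (℘ : ZMod 3) = 2 := by rw [hPmod, h1]; norm_num
    have hodd : Odd (m - 1) := Nat.Even.sub_odd hm hmeven odd_one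
    have hpow : ((℘ : ZMod 3)) ^ (m - 1) = -1 := by
      rw [hP, show (2 : ZMod 3) = -1 by decide, hodd.neg_one_pow]
    have hT0v : T0 = 2 := by rw [hrt, hpow, hP]; decide
    have hT1v : T1 = 1 := by rw [hT1, hpow]; decide
    rw [hsumval, hT0v, hT1v]
    show ζ ^ (2 : ZMod 3).val + ((℘:ℂ) - 1) * ζ ^ (1 : ZMod 3).val + ((℘:ℂ)^m - ℘) * 1
      = ζ ^ 2 + ((℘ : ℂ) - 1) * ζ + (℘ : ℂ) ^ m - (℘ : ℂ)
    rw [show (2 : ZMod 3).val = 2 from rfl, show (1 : ZMod 3).val = 1 from rfl]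
    ring
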